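/- For every λ ∈ ℝ, let μ_λ be the Lie bracket on ℝ^7 with nonzero basis brackets [e1,e2]=e4, [e1,e3]=e5, [e1,e6]=e7, [e2,e3]=e6, [e2,e5]=λe7, [e3,e4]=(λ-1)e7. Then μ_λ satisfies the Jacobi identity, φ = (1/2)·diag(1,1,1,2,2,2,3) is a derivation of (ℝ^7,μ_λ), and φ is pre-Einstein, i.e. trace(φ∘ψ) = trace(ψ) for every derivation ψ of (ℝ^7,μ_λ). -/
import Mathlib


open Finset

noncomputable section

/-- `ℝ⁷` with its standard basis and standard inner product. -/
abbrev V7 : Type := Fin 7 → ℝ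

/-- The standard basis vector `e i`. -/
def e (i : Fin 7) : V7 := Pi.single i 1

/-- The standard inner product on `ℝ⁷`. -/
def dot (x y : V7) : ℝ := ∑ i, x i * y i

/-- Structure constants built from a list of entries `(i, j, k, a)`, each meaning that
`μ (e i) (e j)` has component `a` along `e k` (and `μ (e j) (e i)` has component `-a`);
all unlisted basis brackets are `0`. -/
def toC (L : List (Fin 7 × Fin 7 × Fin 7 × ℝ)) (i j k : Fin 7) : ℝ :=
  (L.map fun t =>
      (if t.1 = i ∧ t.2.1 = j ∧ t.2.2.1 = k then t.2.2.2 else 0)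
    - (if t.1 = j ∧ t.2.1 = i ∧ t.2.2.1 = k then t.2.2.2 else 0)).sum

/-- The bilinear skew-symmetric map on `ℝ⁷` with structure constants `c`. -/
def br (c : Fin 7 → Fin 7 → Fin 7 → ℝ) (x y : V7) : V7 :=
  fun k => ∑ i, ∑ j, x i * y j * c i j k

lemma br_add_left (c : Fin 7 → Fin 7 → Fin 7 → ℝ) (x x' y : V7) :
    br c (x + x') y = br c x y + br c x' y := by
  funext k
  simp only [br, Pi.add_apply, ← Finset.sum_add_distrib]
  exact Finset.sum_congr rfl fun i _ => Finset.sum_congr rfl fun j _ => by ring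

lemma br_smul_left (c : Fin 7 → Fin 7 → Fin 7 → ℝ) (r : ℝ) (x y : V7) :
    br c (r • x) y = r • br c x y := by
  funext k
  simp only [br, Pi.smul_apply, smul_eq_mul, Finset.mul_sum]
  exact Finset.sum_congr rfl fun i _ => Finset.sum_congr rfl fun j _ => by ring

lemma br_add_right (c : Fin 7 → Fin 7 → Fin 7 → ℝ) (x y y' : V7) :
    br c x (y + y') = br c x y + br c x y' := by
  funext k
  simp only [br, Pi.add_apply, ← Finset.sum_add_distrib]
  exact Finset.sum_congr rfl fun i _ => Finset.sum_congr rfl fun j _ => by ring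

lemma br_smul_right (c : Fin 7 → Fin 7 → Fin 7 → ℝ) (r : ℝ) (x y : V7) :
    br c x (r • y) = r • br c x y := by
  funext k
  simp only [br, Pi.smul_apply, smul_eq_mul, Finset.mul_sum]
  exact Finset.sum_congr rfl fun i _ => Finset.sum_congr rfl fun j _ => by ring

lemma br_zero_left (c : Fin 7 → Fin 7 → Fin 7 → ℝ) (y : V7) : br c 0 y = 0 := by
  funext k; simp [br]

lemma br_zero_right (c : Fin 7 → Fin 7 → Fin 7 → ℝ) (x : V7) : br c x 0 = 0 := by
  funext k; simp [br]

/-- The space of derivations of the algebra `(ℝ⁷, br c)`, i.e. the linear maps `D` with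
`D (μ x y) = μ (D x) y + μ x (D y)` for all `x, y`, as a submodule of the endomorphisms. -/
def derivations (c : Fin 7 → Fin 7 → Fin 7 → ℝ) : Submodule ℝ (Module.End ℝ V7) where
  carrier := {D | ∀ x y, D (br c x y) = br c (D x) y + br c x (D y)}
  add_mem' := by
    intro D E hD hE x y
    simp only [LinearMap.add_apply, hD x y, hE x y, br_add_left, br_add_right]
    abel
  zero_mem' := by
    intro x y
    simp [br_zero_left, br_zero_right]
  smul_mem' := by
    intro r D hD x y
    simp only [LinearMap.smul_apply, hD x y, smul_add, br_smul_left, br_smul_right]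

/-- The Jacobi identity for the bracket `br c`. -/
def Jacobi (c : Fin 7 → Fin 7 → Fin 7 → ℝ) : Prop :=
  ∀ x y z : V7, br c (br c x y) z + br c (br c y z) x + br c (br c z x) y = 0

/-- Skew-symmetry of the bracket `br c`. -/
def Skew (c : Fin 7 → Fin 7 → Fin 7 → ℝ) : Prop :=
  ∀ x y : V7, br c x y = - br c y x

/-- The diagonal endomorphism `diag (a 1, …, a 7)` of `ℝ⁷`, `e i ↦ a i • e i`. -/
def diagL (a : Fin 7 → ℝ) : Module.End ℝ V7 :=
  LinearMap.pi fun i => a i • LinearMap.proj i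

/-- Structure constants of the bracket `μ_λ` with nonzero basis brackets
`[e1,e2]=e4, [e1,e3]=e5, [e1,e6]=e7, [e2,e3]=e6, [e2,e5]=λe7, [e3,e4]=(λ-1)e7`. -/
def c9 (lam : ℝ) : Fin 7 → Fin 7 → Fin 7 → ℝ :=
  toC [(0, 1, 3, (1:ℝ)),
   (0, 2, 4, 1),
   (0, 5, 6, 1),
   (1, 2, 5, 1),
   (1, 4, 6, lam),
   (2, 3, 6, lam - 1)]

def rhs (lam : ℝ) (v w : V7) : V7 := fun k =>
  if k = 3 then v 0 * w 1 - v 1 * w 0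
  else if k = 4 then v 0 * w 2 - v 2 * w 0
  else if k = 5 then v 1 * w 2 - v 2 * w 1
  else if k = 6 then v 0 * w 5 - v 5 * w 0 + lam * (v 1 * w 4 - v 4 * w 1)
        + (lam - 1) * (v 2 * w 3 - v 3 * w 2)
  else 0

lemma br_c9 (lam : ℝ) (v w : V7) : br (c9 lam) v w = rhs lam v w := by
  funext k
  fin_cases k <;> simp [br, c9, toC, rhs, Fin.sum_univ_seven] <;> ring


lemma fv0 : ((0 : Fin 7) : ℕ) = 0 := rfl
lemma fv1 : ((1 : Fin 7) : ℕ) = 1 := rfl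
lemma fv2 : ((2 : Fin 7) : ℕ) = 2 := rfl
lemma fv3 : ((3 : Fin 7) : ℕ) = 3 := rfl
lemma fv4 : ((4 : Fin 7) : ℕ) = 4 := rfl
lemma fv5 : ((5 : Fin 7) : ℕ) = 5 := rfl
lemma fv6 : ((6 : Fin 7) : ℕ) = 6 := rfl

def A : Fin 7 → ℝ := fun i => if i.val ≤ 2 then 1/2 else if i.val ≤ 5 then 1 else 3/2

lemma phiv (v : V7) :
    ((1/2 : ℝ) • diagL ![1, 1, 1, 2, 2, 2, 3]) v = fun k => A k * v k := by
  funext k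
  fin_cases k <;>
    simp [diagL, A,
      show (![(1:ℝ),1,1,2,2,2,3]) 0 = 1 from rfl,
      show (![(1:ℝ),1,1,2,2,2,3]) 1 = 1 from rfl,
      show (![(1:ℝ),1,1,2,2,2,3]) 2 = 1 from rfl,
      show (![(1:ℝ),1,1,2,2,2,3]) 3 = 2 from rfl,
      show (![(1:ℝ),1,1,2,2,2,3]) 4 = 2 from rfl,
      show (![(1:ℝ),1,1,2,2,2,3]) 5 = 2 from rfl,
      show (![(1:ℝ),1,1,2,2,2,3]) 6 = 3 from rfl] <;> ring

lemma trace_eq (θ : Module.End ℝ V7) :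
    LinearMap.trace ℝ V7 θ = ∑ i, θ (e i) i := by
  rw [LinearMap.trace_eq_matrix_trace ℝ (Pi.basisFun ℝ (Fin 7)) θ, Matrix.trace]
  simp [LinearMap.toMatrix_apply, Matrix.diag, e]

/-- The bracket satisfies the Jacobi identity (and is skew-symmetric), `φ` is a derivation
of it, and `φ` is pre-Einstein: `trace (φ ∘ ψ) = trace ψ` for every derivation `ψ`. -/
theorem stmt (lam : ℝ) :
    Skew (c9 lam) ∧ Jacobi (c9 lam) ∧
    ((1/2 : ℝ) • diagL ![1, 1, 1, 2, 2, 2, 3]) ∈ derivations (c9 lam) ∧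
    ∀ ψ ∈ derivations (c9 lam),
      LinearMap.trace ℝ V7 (((1/2 : ℝ) • diagL ![1, 1, 1, 2, 2, 2, 3]) ∘ₗ ψ) = LinearMap.trace ℝ V7 ψ := by
  refine ⟨?_, ?_, ?_, ?_⟩
  · intro x y
    rw [br_c9, br_c9]
    funext k
    simp only [rhs, Pi.neg_apply]
    split_ifs <;> ring
  · intro x y z
    simp only [br_c9]
    funext k
    fin_cases k <;> simp [rhs] <;> ring
  · show ∀ x y : V7, _ = _
    intro x y
    simp only [br_c9, phiv]
    funext k
    fin_cases k <;> simp [rhs, A, Pi.add_apply, fv0, fv1, fv2, fv3, fv4, fv5, fv6] <;> ring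
  · intro ψ hψ
    have h : ∀ x y : V7, ψ (br (c9 lam) x y) = br (c9 lam) (ψ x) y + br (c9 lam) x (ψ y) := hψ
    have hb12 : br (c9 lam) (e 1) (e 2) = e 5 := by
      rw [br_c9]; funext k; fin_cases k <;> simp [rhs, e, Pi.single_apply]
    have hb05 : br (c9 lam) (e 0) (e 5) = e 6 := by
      rw [br_c9]; funext k; fin_cases k <;> simp [rhs, e, Pi.single_apply]
    have h55 : ψ (e 5) 5 = ψ (e 1) 1 + ψ (e 2) 2 := by
      have := h (e 1) (e 2)
      rw [hb12, br_c9, br_c9] at this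
      have h5 := congrFun this 5
      simpa [rhs, e, Pi.single_apply] using h5
    have h66 : ψ (e 6) 6 = ψ (e 0) 0 + ψ (e 5) 5 := by
      have := h (e 0) (e 5)
      rw [hb05, br_c9, br_c9] at this
      have h6 := congrFun this 6
      simpa [rhs, e, Pi.single_apply] using h6
    rw [trace_eq, trace_eq]
    simp only [LinearMap.comp_apply, phiv]
    rw [Fin.sum_univ_seven, Fin.sum_univ_seven]
    simp only [A]
    norm_num [fv0, fv1, fv2, fv3, fv4, fv5, fv6]
    linear_combination (1/2 : ℝ) * h66 + (1/2 : ℝ) * h55
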